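/- Let X ∼ GOE(n). Let p be an LDP in dimension n of total degree at most Δ, and let S ⊆ {1,…,n} satisfy S ⊆ p. Suppose that for every exponent α with c_{p,α} ≠ 0, either x^α is connected, or α = α₁ + α₂ for exponent matrices α₁, α₂ with disjoint supports such that x^{α₁} and x^{α₂} are both connected and neither α₁ nor α₂ satisfies 'G_α is a tree and all entries ≤ 2'. Then there exists a constant c = c(Δ), independent of n, such that |E[p(X) − p^Tr(X)]| ≤ c ‖p‖ / n^{|S|}. -/

import Mathlib

open MeasureTheory ProbabilityTheory Filter
open scoped ENNReal NNReal

noncomputable section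

/-- Index type of the variables `x_{ij}`, `1 ≤ i < j ≤ n`. -/
abbrev Edge (n : ℕ) : Type := {e : Fin n × Fin n // e.1 < e.2}

/-- A (low-degree) polynomial in the variables `x_{ij}`, `1 ≤ i < j ≤ n`. -/
abbrev LDP (n : ℕ) : Type := MvPolynomial (Edge n) ℝ

/-- `‖p‖ = max_α |c_{p,α}|`. -/
def LDPnorm {n : ℕ} (p : LDP n) : ℝ :=
  ⨆ α : Edge n →₀ ℕ, |MvPolynomial.coeff α p|

/-- Evaluation of an LDP at the entries `(M i j)_{i<j}` of a matrix. -/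
def evalMat {n : ℕ} (p : LDP n) (M : Matrix (Fin n) (Fin n) ℝ) : ℝ :=
  MvPolynomial.eval (fun e : Edge n => M e.val.1 e.val.2) p

/-- The vertex set `V_α` of the factor graph of an exponent `α`. -/
def vertexSet {n : ℕ} (α : Edge n →₀ ℕ) : Set (Fin n) :=
  {k | ∃ e : Edge n, α e ≠ 0 ∧ (e.val.1 = k ∨ e.val.2 = k)}

/-- The factor graph `G_α`. -/
def graphOf {n : ℕ} (α : Edge n →₀ ℕ) : SimpleGraph (Fin n) where
  Adj i j := (∃ h : i < j, α ⟨(i, j), h⟩ ≠ 0) ∨ (∃ h : j < i, α ⟨(j, i), h⟩ ≠ 0)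
  symm := ⟨by intro i j h; exact h.symm⟩
  loopless := ⟨by intro i h; rcases h with ⟨h, _⟩ | ⟨h, _⟩ <;> exact absurd h (lt_irrefl i)⟩

/-- `x^α` is connected: all vertices of `V_α` are mutually reachable in `G_α`
(vacuously true for the constant monomial). -/
def ConnectedExp {n : ℕ} (α : Edge n →₀ ℕ) : Prop :=
  ∀ u ∈ vertexSet α, ∀ v ∈ vertexSet α, (graphOf α).Reachable u v

/-- `G_α` is a tree. -/
def IsTreeExp {n : ℕ} (α : Edge n →₀ ℕ) : Prop :=
  ConnectedExp α ∧ (graphOf α).IsAcyclic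

/-- every entry of `α` is at most 2. -/
def MaxTwo {n : ℕ} (α : Edge n →₀ ℕ) : Prop := ∀ e : Edge n, α e ≤ 2

/-- `G_α` a tree and all entries of `α` at most `2`. -/
def IsTree2 {n : ℕ} (α : Edge n →₀ ℕ) : Prop := IsTreeExp α ∧ MaxTwo α

/-- `‖α‖₁`. -/
def expDeg {n : ℕ} (α : Edge n →₀ ℕ) : ℕ := α.sum fun _ k => k

/-- `p ∈ T_{n,2,Δ}`. -/
def MemT2 {n : ℕ} (Δ : ℕ) (p : LDP n) : Prop :=
  ∀ α : Edge n →₀ ℕ, MvPolynomial.coeff α p ≠ 0 → IsTree2 α ∧ expDeg α ≤ Δ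

/-- `p` is a connected LDP. -/
def ConnectedLDP {n : ℕ} (p : LDP n) : Prop :=
  ∀ α : Edge n →₀ ℕ, MvPolynomial.coeff α p ≠ 0 → ConnectedExp α

/-- `p` contains node `i` (the constant monomial contains every node). -/
def ContainsNode {n : ℕ} (i : Fin n) (p : LDP n) : Prop :=
  ∀ α : Edge n →₀ ℕ, MvPolynomial.coeff α p ≠ 0 → α = 0 ∨ i ∈ vertexSet α

/-- `S ⊆ p` (the constant monomial contains every node). -/
def ContainsSet {n : ℕ} (S : Finset (Fin n)) (p : LDP n) : Prop :=
  ∀ α : Edge n →₀ ℕ, MvPolynomial.coeff α p ≠ 0 → α = 0 ∨ (S : Set (Fin n)) ⊆ vertexSet α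

open scoped Classical in
/-- The tree projection `p^Tr`. -/
def treeProj {n : ℕ} (p : LDP n) : LDP n :=
  ∑ α ∈ p.support, if IsTree2 α then MvPolynomial.monomial α (MvPolynomial.coeff α p) else 0

instance matrixMeasurableSpace {m n α : Type*} [MeasurableSpace α] :
    MeasurableSpace (Matrix m n α) :=
  inferInstanceAs (MeasurableSpace (m → n → α))

/-- Build a symmetric zero-diagonal matrix out of upper-triangular entries. -/
def symmetrize {n : ℕ} (g : Edge n → ℝ) : Matrix (Fin n) (Fin n) ℝ :=
  Matrix.of fun i j =>
    if h : i < j then g ⟨(i, j), h⟩ else if h' : j < i then g ⟨(j, i), h'⟩ else 0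

/-- The GOE(n) distribution, as a measure on symmetric zero-diagonal matrices:
i.i.d. `N(0, 1/n)` entries above the diagonal. -/
def GOEMeasure (n : ℕ) : Measure (Matrix (Fin n) (Fin n) ℝ) :=
  (Measure.pi fun _ : Edge n => gaussianReal 0 (n : ℝ≥0)⁻¹).map symmetrize

/-- The law of `-(B - d/n)/√(d(1-d/n))`, `B ∼ Bernoulli(d/n)`. -/
def hatGEntry (n : ℕ) (d : ℝ) : Measure ℝ :=
  (Real.toNNReal (1 - d / n)) • Measure.dirac ((d / n) / Real.sqrt (d * (1 - d / n)))
    + (Real.toNNReal (d / n)) • Measure.dirac (-(1 - d / n) / Real.sqrt (d * (1 - d / n)))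

instance hatGEntry.isFiniteMeasure (n : ℕ) (d : ℝ) : IsFiniteMeasure (hatGEntry n d) := by
  unfold hatGEntry; infer_instance

/-- The distribution `Ĝ(n, d/n)` of the centered rescaled adjacency matrix. -/
def hatGMeasure (n : ℕ) (d : ℝ) : Measure (Matrix (Fin n) (Fin n) ℝ) :=
  (Measure.pi fun _ : Edge n => hatGEntry n d).map symmetrize

/-- `p(M) = (p_1(M),…,p_n(M))`. -/
def pEval {n : ℕ} (p : Fin n → LDP n) (M : Matrix (Fin n) (Fin n) ℝ) : Fin n → ℝ :=
  fun i => evalMat (p i) M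

/-- `vᵀ M v`. -/
def quadForm {n : ℕ} (M : Matrix (Fin n) (Fin n) ℝ) (v : Fin n → ℝ) : ℝ :=
  dotProduct v (M.mulVec v)

/-- Euclidean distance from `z` to the cube `[-1,1]ⁿ`. -/
def cubeDist {n : ℕ} (z : Fin n → ℝ) : ℝ :=
  Real.sqrt (∑ i, max (|z i| - 1) 0 ^ 2)

/-- The logistic function `φ`. -/
def logistic (z : ℝ) : ℝ := Real.exp z / (1 + Real.exp z)

/-- The smooth approximation `π_a` of the distance to `[-1,1]`. -/
def pia (a z : ℝ) : ℝ :=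
  (Real.log (1 + Real.exp (a * (z - 1))) + Real.log (1 + Real.exp (a * (-z - 1)))) / a

end

open SimpleGraph

lemma reachable_of_walk_deleteEdge {V : Type*} {G : SimpleGraph V} {x y : V}
    (hxy : (G \ fromEdgeSet {s(x,y)}).Reachable x y) :
    ∀ {u w : V}, G.Walk u w → (G \ fromEdgeSet {s(x,y)}).Reachable u w := by
  intro u w p
  induction p with
  | nil => exact Reachable.refl _
  | @cons a b c h q ih =>
    refine Reachable.trans ?_ ih
    by_cases he : s(a,b) = s(x,y)
    · rw [Sym2.eq_iff] at he
      rcases he with ⟨rfl, rfl⟩ | ⟨rfl, rfl⟩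
      · exact hxy
      · exact hxy.symm
    · refine Adj.reachable ?_
      rw [sdiff_adj, fromEdgeSet_adj]
      exact ⟨h, fun hh => he hh.1⟩

lemma conn_card_le_aux {V : Type*} [Fintype V] :
    ∀ (m : ℕ) (G : SimpleGraph V), G.Connected → G.edgeSet.ncard = m →
      (Fintype.card V ≤ m + 1 ∧ (¬ G.IsAcyclic → Fintype.card V ≤ m)) := by
  intro m
  induction m using Nat.strong_induction_on with
  | _ m ih =>
    intro G hconn hcard
    classical
    by_cases hac : G.IsAcyclic
    · have htree : G.IsTree := ⟨hconn, hac⟩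
      have := htree.card_edgeFinset
      have hef : G.edgeFinset.card = m := by
        rw [← hcard, ← SimpleGraph.coe_edgeFinset, Set.ncard_coe_finset]
      exact ⟨by omega, fun h => absurd hac h⟩
    · rw [isAcyclic_iff_forall_adj_isBridge] at hac
      push_neg at hac
      obtain ⟨x, y, hadj, hbr⟩ := hac
      rw [isBridge_iff] at hbr
      push_neg at hbr
      have hreach : (G \ fromEdgeSet {s(x,y)}).Reachable x y := by exact hbr
      set G₂ := G \ fromEdgeSet {s(x,y)} with hG₂
      have hconn₂ : G₂.Connected := by
        have : Nonempty V := hconn.nonempty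
        exact Connected.mk fun u w => reachable_of_walk_deleteEdge hreach (hconn u w).some
      have hmem : s(x,y) ∈ G.edgeSet := hadj
      have hE₂ : G₂.edgeSet = G.edgeSet \ {s(x,y)} := by
        rw [hG₂, ← deleteEdges, edgeSet_deleteEdges]
      have hm1 : 1 ≤ m := by
        rw [← hcard]
        exact (Set.ncard_pos (Set.toFinite _)).2 ⟨_, hmem⟩
      have hcard₂ : G₂.edgeSet.ncard = m - 1 := by
        rw [hE₂, Set.ncard_diff_singleton_of_mem hmem, hcard]
      have := (ih (m-1) (by omega) G₂ hconn₂ hcard₂).1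
      exact ⟨by omega, fun _ => by omega⟩

lemma conn_card_le {V : Type*} [Fintype V] (G : SimpleGraph V) (h : G.Connected) :
    Fintype.card V ≤ G.edgeSet.ncard + 1 :=
  (conn_card_le_aux _ G h rfl).1

lemma conn_card_le_of_not_acyclic {V : Type*} [Fintype V] (G : SimpleGraph V)
    (h : G.Connected) (h2 : ¬ G.IsAcyclic) :
    Fintype.card V ≤ G.edgeSet.ncard :=
  (conn_card_le_aux _ G h rfl).2 h2

section GraphApp
open SimpleGraph
variable {n : ℕ} {α : Edge n →₀ ℕ}

lemma mem_vertexSet_left {u v : Fin n} (h : (graphOf α).Adj u v) : u ∈ vertexSet α := by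
  rcases h with ⟨h, hne⟩ | ⟨h, hne⟩
  · exact ⟨⟨(u,v),h⟩, hne, Or.inl rfl⟩
  · exact ⟨⟨(v,u),h⟩, hne, Or.inr rfl⟩

lemma support_subset_vertexSet {a b : Fin n} (p : (graphOf α).Walk a b)
    (hb : b ∈ vertexSet α) : ∀ x ∈ p.support, x ∈ vertexSet α := by
  induction p with
  | nil => intro x hx; rw [Walk.support_nil, List.mem_singleton] at hx; exact hx ▸ hb
  | @cons a c b h q ih =>
    intro x hx
    rw [Walk.support_cons, List.mem_cons] at hx
    rcases hx with rfl | hx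
    · exact mem_vertexSet_left h
    · exact ih hb x hx

/-- The monomorphism from an induced graph into the ambient graph. -/
def induceVal {V : Type*} (G : SimpleGraph V) (s : Set V) : G.induce s →g G where
  toFun := Subtype.val
  map_rel' := by intro a b h; exact h

/-- lift a walk into the induced graph on a set containing its support -/
def liftWalk {V : Type*} {G : SimpleGraph V} {s : Set V} :
    ∀ {u w : V} (p : G.Walk u w) (hu : u ∈ s) (hw : w ∈ s),
      (∀ x ∈ p.support, x ∈ s) → (G.induce s).Walk ⟨u,hu⟩ ⟨w,hw⟩
  | _, _, Walk.nil, _, _, _ => Walk.nil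
  | _, _, Walk.cons (v := b) h q, hu, hw, hs =>
      Walk.cons (by simpa using h)
        (liftWalk q (hs b (by simp)) hw (fun x hx => hs x (by simp [hx])))

lemma liftWalk_map {V : Type*} {G : SimpleGraph V} {s : Set V} :
    ∀ {u w : V} (p : G.Walk u w) (hu : u ∈ s) (hw : w ∈ s)
      (hs : ∀ x ∈ p.support, x ∈ s),
      (liftWalk p hu hw hs).map (induceVal G s) = p
  | _, _, Walk.nil, _, _, _ => rfl
  | _, _, Walk.cons (v := b) h q, hu, hw, hs => by
      rw [liftWalk, Walk.map_cons, liftWalk_map]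
      rfl

lemma induce_connected_of_connectedExp (h : ConnectedExp α) (hne : (vertexSet α).Nonempty) :
    ((graphOf α).induce (vertexSet α)).Connected := by
  obtain ⟨u₀, hu₀⟩ := hne
  refine induce_connected_of_patches u₀ hu₀ ?_
  intro v hv
  obtain ⟨p⟩ := h u₀ hu₀ v hv
  refine ⟨{x | x ∈ p.support}, ?_, p.start_mem_support, p.end_mem_support, ?_⟩
  · intro x hx; exact support_subset_vertexSet p hv x hx
  · exact (p.connected_induce_support _ _)

lemma induce_not_acyclic (h2 : ¬ (graphOf α).IsAcyclic) :
    ¬ ((graphOf α).induce (vertexSet α)).IsAcyclic := by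
  rw [IsAcyclic] at h2
  push_neg at h2
  obtain ⟨v, c, hc⟩ := h2
  have hv : v ∈ vertexSet α := by
    cases c with
    | nil => exact absurd rfl hc.ne_nil
    | cons h q => exact mem_vertexSet_left h
  have hs := support_subset_vertexSet c hv
  intro hac
  have hcyc : (liftWalk c hv hv hs).IsCycle := by
    rw [← Walk.map_isCycle_iff_of_injective (f := induceVal (graphOf α) (vertexSet α))
      Subtype.val_injective, liftWalk_map]
    exact hc
  exact hac _ hcyc

lemma induce_edge_ncard_le :
    ((graphOf α).induce (vertexSet α)).edgeSet.ncard ≤ α.support.card := by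
  classical
  have h1 : (Sym2.map Subtype.val) '' ((graphOf α).induce (vertexSet α)).edgeSet
      ⊆ (graphOf α).edgeSet := by
    rintro e ⟨f, hf, rfl⟩
    induction f with
    | _ a b => exact (Sym2.map_pair_eq _ _ _) ▸ hf
  have h2 : (graphOf α).edgeSet ⊆ (fun e : Edge n => s(e.val.1, e.val.2)) '' ↑α.support := by
    intro e he
    induction e with
    | _ a b =>
      rcases he with ⟨h, hne⟩ | ⟨h, hne⟩
      · exact ⟨⟨(a,b),h⟩, by simpa using hne, rfl⟩
      · exact ⟨⟨(b,a),h⟩, by simpa using hne, Sym2.eq_swap⟩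
  calc ((graphOf α).induce (vertexSet α)).edgeSet.ncard
      = ((Sym2.map Subtype.val) '' ((graphOf α).induce (vertexSet α)).edgeSet).ncard :=
        (Set.ncard_image_of_injective _ (Sym2.map.injective Subtype.val_injective)).symm
    _ ≤ ((fun e : Edge n => s(e.val.1, e.val.2)) '' ↑α.support).ncard :=
        Set.ncard_le_ncard (h1.trans h2) ((α.support : Set (Edge n)).toFinite.image _)
    _ ≤ (↑α.support : Set (Edge n)).ncard := Set.ncard_image_le (Set.toFinite _)
    _ = α.support.card := Set.ncard_coe_finset _

lemma vertexSet_ncard_le_of_conn (h : ConnectedExp α) :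
    (vertexSet α).ncard ≤ α.support.card + 1 := by
  classical
  rcases Set.eq_empty_or_nonempty (vertexSet α) with he | hne
  · simp [he]
  · have hconn := induce_connected_of_connectedExp h hne
    have := conn_card_le _ hconn
    have hcard : (vertexSet α).ncard = Fintype.card ↥(vertexSet α) := by
      rw [Set.ncard_eq_toFinset_card', Set.toFinset_card]
    have := induce_edge_ncard_le (α := α)
    omega
lemma vertexSet_ncard_le_of_not_acyclic (h : ConnectedExp α)
    (h2 : ¬ (graphOf α).IsAcyclic) :
    (vertexSet α).ncard ≤ α.support.card := by
  classical
  rcases Set.eq_empty_or_nonempty (vertexSet α) with he | hne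
  · simp [he]
  · have hconn := induce_connected_of_connectedExp h hne
    have hb := conn_card_le_of_not_acyclic _ hconn (induce_not_acyclic h2)
    have hcard : (vertexSet α).ncard = Fintype.card ↥(vertexSet α) := by
      rw [Set.ncard_eq_toFinset_card', Set.toFinset_card]
    have := induce_edge_ncard_le (α := α)
    omega

end GraphApp

section Struct
variable {n : ℕ}

lemma vertexSet_zero : vertexSet (0 : Edge n →₀ ℕ) = ∅ := by
  ext k; simp [vertexSet]

lemma isTree2_zero : IsTree2 (0 : Edge n →₀ ℕ) := by
  refine ⟨⟨?_, ?_⟩, ?_⟩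
  · intro u hu; rw [vertexSet_zero] at hu; exact absurd hu (Set.notMem_empty u)
  · intro v c hc
    cases c with
    | nil => exact hc.ne_nil rfl
    | cons h q => rcases h with ⟨_, h⟩ | ⟨_, h⟩ <;> simp at h
  · intro e; simp

lemma two_le_of_even_ne_zero {k : ℕ} (he : Even k) (hne : k ≠ 0) : 2 ≤ k := by
  rcases he with ⟨m, rfl⟩; omega

lemma expDeg_lower_conn (α : Edge n →₀ ℕ) (heven : ∀ e, Even (α e))
    (hconn : ConnectedExp α) (hnt : ¬ IsTree2 α) :
    2 * (vertexSet α).ncard ≤ expDeg α := by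
  classical
  have hsum : expDeg α = ∑ e ∈ α.support, α e := rfl
  by_cases hmax : MaxTwo α
  · have hnac : ¬ (graphOf α).IsAcyclic := by
      intro hac; exact hnt ⟨⟨hconn, hac⟩, hmax⟩
    have h1 := vertexSet_ncard_le_of_not_acyclic hconn hnac
    have h2 : 2 * α.support.card ≤ ∑ e ∈ α.support, α e := by
      simpa [mul_comm] using Finset.card_nsmul_le_sum α.support (fun e => α e) 2
        (fun e he => two_le_of_even_ne_zero (heven e) (Finsupp.mem_support_iff.1 he))
    rw [hsum]; omega
  · rw [MaxTwo] at hmax; push_neg at hmax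
    obtain ⟨e₀, he₀⟩ := hmax
    have he₀4 : 4 ≤ α e₀ := by
      rcases heven e₀ with ⟨m, hm⟩; omega
    have he₀s : e₀ ∈ α.support := Finsupp.mem_support_iff.2 (by omega)
    have h1 := vertexSet_ncard_le_of_conn hconn
    have h2 : 2 * (α.support.erase e₀).card ≤ ∑ e ∈ α.support.erase e₀, α e := by
      simpa [mul_comm] using Finset.card_nsmul_le_sum (α.support.erase e₀) (fun e => α e) 2
        (fun e he => two_le_of_even_ne_zero (heven e)
          (Finsupp.mem_support_iff.1 (Finset.mem_of_mem_erase he)))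
    have h3 : α e₀ + ∑ e ∈ α.support.erase e₀, α e = ∑ e ∈ α.support, α e :=
      Finset.add_sum_erase _ _ he₀s
    have h4 : (α.support.erase e₀).card + 1 = α.support.card :=
      Finset.card_erase_add_one he₀s
    rw [hsum]; omega

lemma expDeg_add (α₁ α₂ : Edge n →₀ ℕ) : expDeg (α₁ + α₂) = expDeg α₁ + expDeg α₂ :=
  Finsupp.sum_add_index' (fun _ => rfl) (fun _ _ _ => rfl)

lemma vertexSet_add_subset (α₁ α₂ : Edge n →₀ ℕ) :
    vertexSet (α₁ + α₂) ⊆ vertexSet α₁ ∪ vertexSet α₂ := by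
  rintro k ⟨e, hne, he⟩
  rcases Nat.eq_zero_or_pos (α₁ e) with h1 | h1
  · exact Or.inr ⟨e, by simp only [Finsupp.add_apply] at hne; omega, he⟩
  · exact Or.inl ⟨e, by omega, he⟩

lemma expDeg_main (α : Edge n →₀ ℕ) (heven : ∀ e, Even (α e)) (hnt : ¬ IsTree2 α)
    (hyp : ConnectedExp α ∨
      ∃ α₁ α₂ : Edge n →₀ ℕ, α = α₁ + α₂ ∧ Disjoint α₁.support α₂.support ∧
        ConnectedExp α₁ ∧ ConnectedExp α₂ ∧ ¬IsTree2 α₁ ∧ ¬IsTree2 α₂) :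
    2 * (vertexSet α).ncard ≤ expDeg α := by
  rcases hyp with hconn | ⟨α₁, α₂, rfl, hdisj, hc1, hc2, ht1, ht2⟩
  · exact expDeg_lower_conn α heven hconn hnt
  · have heven1 : ∀ e, Even (α₁ e) := by
      intro e
      rcases Nat.eq_zero_or_pos (α₁ e) with h | h
      · simp [h]
      · have h2 : α₂ e = 0 := by
          by_contra h2
          exact (Finset.disjoint_left.1 hdisj (Finsupp.mem_support_iff.2 (by omega))
            (Finsupp.mem_support_iff.2 h2))
        have := heven e
        simpa [Finsupp.add_apply, h2] using this
    have heven2 : ∀ e, Even (α₂ e) := by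
      intro e
      rcases Nat.eq_zero_or_pos (α₂ e) with h | h
      · simp [h]
      · have h1 : α₁ e = 0 := by
          by_contra h1
          exact (Finset.disjoint_left.1 hdisj (Finsupp.mem_support_iff.2 h1)
            (Finsupp.mem_support_iff.2 (by omega)))
        have := heven e
        simpa [Finsupp.add_apply, h1] using this
    have d1 := expDeg_lower_conn α₁ heven1 hc1 ht1
    have d2 := expDeg_lower_conn α₂ heven2 hc2 ht2
    have hsub := vertexSet_add_subset α₁ α₂
    have hcard : (vertexSet (α₁ + α₂)).ncard ≤
        (vertexSet α₁).ncard + (vertexSet α₂).ncard := by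
      refine le_trans (Set.ncard_le_ncard hsub ?_) (Set.ncard_union_le _ _)
      exact (Set.toFinite _).union (Set.toFinite _)
    rw [expDeg_add]; omega

end Struct

section Moments
open MeasureTheory ProbabilityTheory Real

lemma integrable_pow_mul_exp_neg_mul_sq' {b : ℝ} (hb : 0 < b) (m : ℕ) :
    Integrable (fun x : ℝ => x ^ m * Real.exp (-b * x ^ 2)) := by
  have h := integrable_rpow_mul_exp_neg_mul_sq hb (s := (m : ℝ))
    (lt_of_lt_of_le (by norm_num) (Nat.cast_nonneg m))
  simpa [Real.rpow_natCast] using h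

lemma integrable_pow_mul_exp_neg_mul_sq'' {b : ℝ} (hb : 0 < b) (k : ℕ) :
    Integrable (fun x : ℝ => x ^ k * Real.exp (-b * x ^ 2)) := by
  refine Integrable.mono' ((integrable_exp_neg_mul_sq hb).add
    (integrable_pow_mul_exp_neg_mul_sq' hb (2 * k)))
    ((by fun_prop : Measurable fun x : ℝ => x ^ k * Real.exp (-b * x^2)).aestronglyMeasurable) ?_
  filter_upwards with x
  have hx2 : (0:ℝ) ≤ x ^ (2 * k) := by rw [pow_mul]; positivity
  have h1 : |x ^ k| ≤ 1 + x ^ (2 * k) := by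
    rcases le_or_gt (|x|) 1 with h | h
    · have : |x ^ k| ≤ 1 := by
        rw [abs_pow]
        exact pow_le_one₀ (abs_nonneg x) h
      linarith
    · have h2 : |x ^ k| ≤ x ^ (2 * k) := by
        rw [abs_pow, ← abs_of_nonneg hx2, abs_pow]
        exact pow_le_pow_right₀ (le_of_lt (lt_of_le_of_lt (by norm_num) h)) (by omega)
      linarith
  have hexp : 0 < Real.exp (-b * x ^ 2) := Real.exp_pos _
  simp only [Pi.add_apply]
  calc ‖x ^ k * Real.exp (-b * x ^ 2)‖ = |x ^ k| * Real.exp (-b * x ^ 2) := by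
        rw [norm_mul, Real.norm_eq_abs, Real.norm_eq_abs, abs_of_pos hexp]
    _ ≤ (1 + x ^ (2 * k)) * Real.exp (-b * x ^ 2) := by
        exact mul_le_mul_of_nonneg_right h1 hexp.le
    _ = Real.exp (-b * x ^ 2) + x ^ (2 * k) * Real.exp (-b * x ^ 2) := by ring

lemma integrable_pow_gaussianReal (v : ℝ≥0) (k : ℕ) :
    Integrable (fun x : ℝ => x ^ k) (gaussianReal 0 v) := by
  rcases eq_or_ne v 0 with rfl | hv
  · rw [gaussianReal_zero_var]
    refine ⟨(by fun_prop : Measurable fun x : ℝ => x ^ k).aestronglyMeasurable, ?_⟩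
    simp only [HasFiniteIntegral]
    rw [lintegral_dirac' _ (by fun_prop)]
    exact ENNReal.coe_lt_top
  · rw [gaussianReal_of_var_ne_zero _ hv,
      integrable_withDensity_iff (measurable_gaussianPDF _ _)
        (Filter.Eventually.of_forall fun x => ENNReal.ofReal_lt_top)]
    have hb : (0:ℝ) < (2 * (v:ℝ))⁻¹ := by
      have : (0:ℝ) < (v:ℝ) := lt_of_le_of_ne v.coe_nonneg (by exact_mod_cast (Ne.symm hv))
      positivity
    have := (integrable_pow_mul_exp_neg_mul_sq'' hb k).const_mul ((Real.sqrt (2 * Real.pi * v))⁻¹)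
    refine this.congr (Filter.Eventually.of_forall fun x => ?_)
    simp only [gaussianPDF_def, gaussianPDFReal]
    ring_nf
    rw [ENNReal.toReal_ofReal (by positivity)]
    ring

/-- `k`-th moment of the standard Gaussian. -/
noncomputable def stdMom (k : ℕ) : ℝ := ∫ x, x ^ k ∂(gaussianReal 0 (1 : ℝ≥0))

lemma gaussianReal_eq_map (v : ℝ≥0) :
    gaussianReal 0 v = (gaussianReal 0 (1 : ℝ≥0)).map (fun x => Real.sqrt v * x) := by
  rw [gaussianReal_map_const_mul]
  congr 1
  · ring
  · ext
    simp [Real.sq_sqrt v.coe_nonneg]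

lemma integral_pow_gaussianReal (v : ℝ≥0) (k : ℕ) :
    ∫ x, x ^ k ∂(gaussianReal 0 v) = Real.sqrt v ^ k * stdMom k := by
  rw [gaussianReal_eq_map v, integral_map (by fun_prop) (by fun_prop)]
  simp_rw [mul_pow]
  rw [integral_const_mul]
  rfl

lemma stdMom_odd {k : ℕ} (hk : Odd k) : stdMom k = 0 := by
  have h : gaussianReal 0 (1 : ℝ≥0) = (gaussianReal 0 (1 : ℝ≥0)).map (fun x => (-1 : ℝ) * x) := by
    rw [gaussianReal_map_const_mul]
    congr 1
    · ring
    · ext; norm_num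
  have h2 : stdMom k = ∫ x, ((-1 : ℝ) * x) ^ k ∂(gaussianReal 0 (1 : ℝ≥0)) := by
    conv_lhs => rw [stdMom, h]
    rw [integral_map (by fun_prop) (by fun_prop)]
  simp_rw [mul_pow, hk.neg_one_pow, neg_one_mul] at h2
  rw [integral_neg, integral_pow_gaussianReal] at h2
  simp only [NNReal.coe_one, Real.sqrt_one, one_pow, one_mul] at h2
  linarith

end Moments

section IntegralComp
open MeasureTheory ProbabilityTheory

variable {n : ℕ}

lemma measurable_mv_eval (q : LDP n) :
    Measurable fun g : Edge n → ℝ => MvPolynomial.eval g q := by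
  classical
  simp_rw [MvPolynomial.eval_eq]
  exact Finset.measurable_sum _ fun α _ => measurable_const.mul
    (Finset.measurable_prod _ fun e _ => (measurable_pi_apply e).pow measurable_const)

lemma measurable_symmetrize : Measurable (symmetrize (n := n)) := by
  apply measurable_pi_lambda; intro i; apply measurable_pi_lambda; intro j
  unfold symmetrize
  simp only [Matrix.of_apply]
  split_ifs with h h'
  · exact measurable_pi_apply _
  · exact measurable_pi_apply _
  · exact measurable_const

lemma evalMat_symmetrize (q : LDP n) (g : Edge n → ℝ) :
    evalMat q (symmetrize g) = MvPolynomial.eval g q := by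
  unfold evalMat
  have h : (fun e : Edge n => symmetrize g e.val.1 e.val.2) = g := by
    funext e
    unfold symmetrize
    simp only [Matrix.of_apply]
    rw [dif_pos e.2]
  rw [h]

lemma stdMom_zero : stdMom 0 = 1 := by
  simp [stdMom]

lemma measurable_evalMat (q : LDP n) : Measurable fun M => evalMat q M := by
  refine (measurable_mv_eval q).comp (measurable_pi_lambda _ fun e => ?_)
  have h1 : Measurable fun M : Matrix (Fin n) (Fin n) ℝ => M e.val.1 := measurable_pi_apply _
  exact (measurable_pi_apply e.val.2).comp h1

/-- standard deviation of each entry -/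
noncomputable def sigN (n : ℕ) : ℝ := Real.sqrt (((n:ℝ≥0)⁻¹ : ℝ≥0) : ℝ)

lemma integral_GOE (q : LDP n) :
    ∫ M, evalMat q M ∂(GOEMeasure n) =
      ∑ α ∈ q.support, MvPolynomial.coeff α q *
        ∏ e ∈ α.support, (sigN n ^ (α e) * stdMom (α e)) := by
  classical
  letI : MeasureSpace ℝ := ⟨gaussianReal 0 (n:ℝ≥0)⁻¹⟩
  have hvol : (Measure.pi fun _ : Edge n => gaussianReal 0 (n:ℝ≥0)⁻¹) =
      (volume : Measure (Edge n → ℝ)) := volume_pi.symm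
  haveI : IsProbabilityMeasure (volume : Measure ℝ) :=
    inferInstanceAs (IsProbabilityMeasure (gaussianReal 0 (n:ℝ≥0)⁻¹))
  have hint : ∀ α : Edge n →₀ ℕ, Integrable
      (fun g : Edge n → ℝ => ∏ e : Edge n, (g e) ^ (α e)) volume :=
    fun α => Integrable.fintype_prod (f := fun e (t : ℝ) => t ^ (α e))
      (fun e => integrable_pow_gaussianReal _ _)
  rw [GOEMeasure, integral_map measurable_symmetrize.aemeasurable
    (measurable_evalMat q).aestronglyMeasurable]
  simp_rw [evalMat_symmetrize, hvol, MvPolynomial.eval_eq]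
  have hsup : ∀ (α : Edge n →₀ ℕ) (g : Edge n → ℝ),
      ∏ e ∈ α.support, g e ^ α e = ∏ e : Edge n, g e ^ α e := fun α g =>
    Finset.prod_subset (Finset.subset_univ _)
      (fun e _ he => by rw [Finsupp.notMem_support_iff.1 he, pow_zero])
  simp_rw [hsup]
  rw [integral_finset_sum _ (fun α _ => (hint α).const_mul _)]
  refine Finset.sum_congr rfl fun α hα => ?_
  rw [MeasureTheory.integral_const_mul,
    MeasureTheory.integral_fintype_prod_volume_eq_prod (f := fun e (t : ℝ) => t ^ (α e))]
  congr 1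
  rw [← Finset.prod_subset (Finset.subset_univ α.support)
    (fun e _ he => by rw [Finsupp.notMem_support_iff.1 he]; simp)]
  refine Finset.prod_congr rfl fun e _ => ?_
  exact integral_pow_gaussianReal _ _

end IntegralComp

section Counting
open Finset

lemma counting {Δ n : ℕ} (hn : 1 ≤ n) (S : Finset (Fin n)) (A : Finset (Edge n →₀ ℕ))
    (hS : ∀ α ∈ A, (S : Set (Fin n)) ⊆ vertexSet α)
    (hdeg : ∀ α ∈ A, expDeg α ≤ Δ)
    (hV : ∀ α ∈ A, (vertexSet α).ncard ≤ Δ) :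
    ∑ α ∈ A, ((n:ℝ)⁻¹) ^ (vertexSet α).ncard ≤
      ((Δ+1:ℝ))^(Δ*Δ) * (Δ+1) * ((n:ℝ)⁻¹) ^ S.card := by
  classical
  set x : ℝ := (n:ℝ)⁻¹ with hx
  have hn0 : (0:ℝ) < n := by exact_mod_cast hn
  have hx0 : 0 ≤ x := by positivity
  set Vf : (Edge n →₀ ℕ) → Finset (Fin n) := fun α => (Set.toFinite (vertexSet α)).toFinset
    with hVf
  have hVcard : ∀ α, (vertexSet α).ncard = (Vf α).card := fun α =>
    Set.ncard_eq_toFinset_card _ _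
  have hmemVf : ∀ α k, k ∈ Vf α ↔ k ∈ vertexSet α := fun α k => Set.Finite.mem_toFinset _
  -- entries are bounded by Δ
  have hent : ∀ α ∈ A, ∀ e, α e ≤ Δ := by
    intro α hα e
    refine le_trans ?_ (hdeg α hα)
    rcases Nat.eq_zero_or_pos (α e) with h | h
    · omega
    · exact Finset.single_le_sum (f := fun e => α e) (fun _ _ => Nat.zero_le _)
        (Finsupp.mem_support_iff.2 (by omega))
  -- support is inside edges of Vf α
  have hsupp : ∀ α ∈ A, ∀ e ∈ α.support,
      e.val.1 ∈ Vf α ∧ e.val.2 ∈ Vf α := by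
    intro α hα e he
    have hne := Finsupp.mem_support_iff.1 he
    exact ⟨(hmemVf α _).2 ⟨e, hne, Or.inl rfl⟩, (hmemVf α _).2 ⟨e, hne, Or.inr rfl⟩⟩
  -- group by vertex sets
  rw [← Finset.sum_fiberwise_of_maps_to (g := Vf) (t := A.image Vf)
    (fun α hα => Finset.mem_image_of_mem _ hα)]
  -- fiber bound
  have hfiber : ∀ W ∈ A.image Vf, ((A.filter (fun α => Vf α = W)).card : ℝ) ≤ (Δ+1:ℝ)^(Δ*Δ) := by
    intro W hW
    obtain ⟨α₀, hα₀, rfl⟩ := Finset.mem_image.1 hW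
    set W := Vf α₀
    set EW : Finset (Edge n) := Finset.univ.filter (fun e => e.val.1 ∈ W ∧ e.val.2 ∈ W) with hEW
    have hEWcard : EW.card ≤ Δ * Δ := by
      have h1 : EW.card ≤ (W ×ˢ W).card := by
        refine Finset.card_le_card_of_injOn (fun e => (e.val.1, e.val.2)) ?_ ?_
        · intro e he
          rw [hEW, Finset.mem_coe, Finset.mem_filter] at he
          exact Finset.mk_mem_product he.2.1 he.2.2
        · intro e _ f _ hef
          apply Subtype.ext
          exact Prod.ext (congrArg Prod.fst hef) (congrArg Prod.snd hef)
      have h2 : (W ×ˢ W).card = W.card * W.card := Finset.card_product _ _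
      have h3 : W.card ≤ Δ := by rw [← hVcard]; exact hV α₀ hα₀
      calc EW.card ≤ W.card * W.card := h1.trans_eq h2
        _ ≤ Δ * Δ := Nat.mul_le_mul h3 h3
    have hcard : (A.filter (fun α => Vf α = W)).card ≤ (Δ+1)^(Δ*Δ) := by
      set F : (Edge n →₀ ℕ) → (EW → Fin (Δ+1)) :=
        fun α e => ⟨min (α e.val) Δ, by omega⟩ with hF
      have hinj : Set.InjOn F (A.filter (fun α => Vf α = W)) := by
        intro α hα β hβ hfe
        rw [Finset.coe_filter, Set.mem_setOf_eq] at hα hβ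
        obtain ⟨hαA, hαW⟩ := hα
        obtain ⟨hβA, hβW⟩ := hβ
        ext e
        by_cases he : e ∈ EW
        · have h1 := congrFun hfe ⟨e, he⟩
          have h2 : min (α e) Δ = α e := min_eq_left (hent α hαA e)
          have h3 : min (β e) Δ = β e := min_eq_left (hent β hβA e)
          rw [hF] at h1
          simp only [Fin.mk.injEq] at h1
          rw [h2, h3] at h1
          exact h1
        · have hα0 : α e = 0 := by
            by_contra h
            refine he ?_
            rw [hEW, Finset.mem_filter]
            have := hsupp α hαA e (Finsupp.mem_support_iff.2 h)
            exact ⟨Finset.mem_univ _, hαW ▸ this⟩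
          have hβ0 : β e = 0 := by
            by_contra h
            refine he ?_
            rw [hEW, Finset.mem_filter]
            have := hsupp β hβA e (Finsupp.mem_support_iff.2 h)
            exact ⟨Finset.mem_univ _, hβW ▸ this⟩
          rw [hα0, hβ0]
      have h4 := Finset.card_le_card_of_injOn F (fun _ _ => Finset.mem_univ _) hinj
      rw [Finset.card_univ, Fintype.card_fun] at h4
      refine h4.trans ?_
      simp only [Fintype.card_coe, Fintype.card_fin]
      exact Nat.pow_le_pow_right (by omega) hEWcard
    calc ((A.filter (fun α => Vf α = W)).card : ℝ) ≤ ((Δ+1)^(Δ*Δ) : ℕ) := by exact_mod_cast hcard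
      _ = (Δ+1:ℝ)^(Δ*Δ) := by push_cast; ring
  have hSW : ∀ W ∈ A.image Vf, S ⊆ W := by
    intro W hW
    obtain ⟨α, hα, rfl⟩ := Finset.mem_image.1 hW
    intro k hk
    exact (hmemVf α k).2 (hS α hα hk)
  have hWΔ : ∀ W ∈ A.image Vf, W.card ≤ Δ := by
    intro W hW; obtain ⟨α, hα, rfl⟩ := Finset.mem_image.1 hW
    rw [← hVcard]; exact hV α hα
  have hT : ∑ W ∈ A.image Vf, x ^ W.card ≤ (Δ+1 : ℝ) * x ^ S.card := by
    rw [← Finset.sum_fiberwise_of_maps_to (g := fun W => (W \ S).card)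
      (t := Finset.range (Δ+1)) (fun W hW => Finset.mem_range.2 (Nat.lt_succ_of_le
        ((Finset.card_le_card Finset.sdiff_subset).trans (hWΔ W hW))))]
    calc ∑ j ∈ Finset.range (Δ+1),
          ∑ W ∈ (A.image Vf).filter (fun W => (W \ S).card = j), x ^ W.card
        ≤ ∑ _j ∈ Finset.range (Δ+1), x ^ S.card := by
          refine Finset.sum_le_sum fun j hj => ?_
          have hcardW : ∀ W ∈ (A.image Vf).filter (fun W => (W \ S).card = j),
              x ^ W.card = x ^ S.card * x ^ j := by
            intro W hW
            obtain ⟨hWim, hWj⟩ := Finset.mem_filter.1 hW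
            have h5 := Finset.card_sdiff_add_card_eq_card (hSW W hWim)
            rw [← pow_add]
            congr 1
            omega
          rw [Finset.sum_congr rfl hcardW, Finset.sum_const, nsmul_eq_mul]
          have hfc : ((((A.image Vf).filter (fun W => (W \ S).card = j)).card : ℕ) : ℝ)
              ≤ (n:ℝ) ^ j := by
            have h1 : ((A.image Vf).filter (fun W => (W \ S).card = j)).card ≤
                (Finset.powersetCard j (Finset.univ : Finset (Fin n))).card := by
              refine Finset.card_le_card_of_injOn (fun W => W \ S) ?_ ?_
              · intro W hW
                rw [Finset.mem_coe, Finset.mem_powersetCard]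
                exact ⟨Finset.subset_univ _, (Finset.mem_filter.1 hW).2⟩
              · intro W₁ h₁ W₂ h₂ h
                rw [Finset.coe_filter, Set.mem_setOf_eq] at h₁ h₂
                simp only at h
                have h' : W₁ \ S ∪ S = W₂ \ S ∪ S := by rw [h]
                rwa [Finset.sdiff_union_of_subset (hSW W₁ h₁.1),
                  Finset.sdiff_union_of_subset (hSW W₂ h₂.1)] at h'
            rw [Finset.card_powersetCard, Finset.card_univ, Fintype.card_fin] at h1
            calc ((((A.image Vf).filter (fun W => (W \ S).card = j)).card : ℕ) : ℝ)
                ≤ (n.choose j : ℝ) := by exact_mod_cast h1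
              _ ≤ ((n^j : ℕ) : ℝ) := by exact_mod_cast Nat.choose_le_pow n j
              _ = (n:ℝ)^j := by push_cast; ring
          calc ((((A.image Vf).filter (fun W => (W \ S).card = j)).card : ℕ) : ℝ)
                * (x ^ S.card * x ^ j)
              ≤ (n:ℝ)^j * (x ^ S.card * x ^ j) :=
                mul_le_mul_of_nonneg_right hfc (by positivity)
            _ = x ^ S.card * ((n:ℝ) * x)^j := by rw [mul_pow]; ring
            _ = x ^ S.card := by
                rw [hx, mul_inv_cancel₀ (ne_of_gt hn0), one_pow, mul_one]
      _ = (Δ+1:ℝ) * x ^ S.card := by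
          rw [Finset.sum_const, Finset.card_range, nsmul_eq_mul]
          push_cast; ring
  calc ∑ W ∈ A.image Vf, ∑ α ∈ A.filter (fun α => Vf α = W), x ^ (vertexSet α).ncard
      ≤ ∑ W ∈ A.image Vf, (Δ+1:ℝ)^(Δ*Δ) * x ^ W.card := by
        refine Finset.sum_le_sum fun W hW => ?_
        have hc : ∀ α ∈ A.filter (fun α => Vf α = W),
            x ^ (vertexSet α).ncard = x ^ W.card := by
          intro α hα
          obtain ⟨hαA, hαW⟩ := Finset.mem_filter.1 hα
          rw [hVcard, hαW]
        rw [Finset.sum_congr rfl hc, Finset.sum_const, nsmul_eq_mul]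
        exact mul_le_mul_of_nonneg_right (hfiber W hW) (by positivity)
    _ = (Δ+1:ℝ)^(Δ*Δ) * ∑ W ∈ A.image Vf, x ^ W.card := by rw [Finset.mul_sum]
    _ ≤ (Δ+1:ℝ)^(Δ*Δ) * ((Δ+1) * x ^ S.card) :=
        mul_le_mul_of_nonneg_left hT (by positivity)
    _ = (Δ+1:ℝ)^(Δ*Δ) * (Δ+1) * x ^ S.card := by ring

end Counting

section Assembly
open Finset

noncomputable def MBound (Δ : ℕ) : ℝ := 1 + ∑ k ∈ Finset.range (Δ+1), |stdMom k|

lemma one_le_MBound (Δ : ℕ) : 1 ≤ MBound Δ :=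
  le_add_of_nonneg_right (Finset.sum_nonneg fun _ _ => abs_nonneg _)

lemma stdMom_le_MBound {Δ k : ℕ} (hk : k ≤ Δ) : |stdMom k| ≤ MBound Δ := by
  refine le_trans ?_ (le_add_of_nonneg_left zero_le_one)
  exact Finset.single_le_sum (f := fun k => |stdMom k|) (fun _ _ => abs_nonneg _)
    (Finset.mem_range.2 (by omega))

open scoped Classical in
lemma coeff_treeProj {n : ℕ} (p : LDP n) (α : Edge n →₀ ℕ) :
    MvPolynomial.coeff α (treeProj p) = if IsTree2 α then MvPolynomial.coeff α p else 0 := by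
  rw [treeProj]
  rw [MvPolynomial.coeff_sum]
  by_cases hαs : α ∈ p.support
  · rw [Finset.sum_eq_single α]
    · split_ifs with h
      · rw [MvPolynomial.coeff_monomial, if_pos rfl]
      · rw [MvPolynomial.coeff_zero]
    · intro β hβ hne
      split_ifs with h
      · rw [MvPolynomial.coeff_monomial, if_neg hne]
      · rw [MvPolynomial.coeff_zero]
    · intro h; exact absurd hαs h
  · have h0 : MvPolynomial.coeff α p = 0 := by
      by_contra h; exact hαs (MvPolynomial.mem_support_iff.2 h)
    rw [h0, ite_self]
    refine Finset.sum_eq_zero fun β hβ => ?_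
    split_ifs with h
    · rw [MvPolynomial.coeff_monomial]
      split_ifs with h2
      · subst h2; exact h0
      · rfl
    · rw [MvPolynomial.coeff_zero]

open scoped Classical in
lemma coeff_sub_treeProj {n : ℕ} (p : LDP n) (α : Edge n →₀ ℕ) :
    MvPolynomial.coeff α (p - treeProj p) =
      if IsTree2 α then 0 else MvPolynomial.coeff α p := by
  rw [MvPolynomial.coeff_sub, coeff_treeProj]
  split_ifs <;> ring

lemma LDPnorm_nonneg {n : ℕ} (p : LDP n) : 0 ≤ LDPnorm p :=
  Real.iSup_nonneg fun _ => abs_nonneg _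

lemma coeff_le_LDPnorm {n : ℕ} (p : LDP n) (α : Edge n →₀ ℕ) :
    |MvPolynomial.coeff α p| ≤ LDPnorm p := by
  classical
  refine le_ciSup (f := fun α => |MvPolynomial.coeff α p|) ⟨∑ β ∈ p.support, |MvPolynomial.coeff β p|, ?_⟩ α
  rintro y ⟨β, rfl⟩
  by_cases hβ : β ∈ p.support
  · exact Finset.single_le_sum (f := fun β => |MvPolynomial.coeff β p|)
      (fun _ _ => abs_nonneg _) hβ
  · simp only [MvPolynomial.notMem_support_iff.1 hβ, abs_zero]
    exact Finset.sum_nonneg fun _ _ => abs_nonneg _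

lemma term_bound {Δ n : ℕ} (hn : 1 ≤ n) (α : Edge n →₀ ℕ) (heven : ∀ e, Even (α e))
    (hdeg : expDeg α ≤ Δ) (hstruct : 2 * (vertexSet α).ncard ≤ expDeg α) :
    |∏ e ∈ α.support, (sigN n ^ α e * stdMom (α e))| ≤
      (MBound Δ)^Δ * ((n:ℝ)⁻¹) ^ (vertexSet α).ncard := by
  have hσ0 : 0 ≤ sigN n := Real.sqrt_nonneg _
  have hM1 := one_le_MBound Δ
  have hn0 : (0:ℝ) < n := by exact_mod_cast hn
  have hx0 : (0:ℝ) ≤ (n:ℝ)⁻¹ := by positivity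
  have hx1 : (n:ℝ)⁻¹ ≤ 1 := by
    rw [inv_le_one_iff₀]; right; exact_mod_cast hn
  have hent : ∀ e ∈ α.support, α e ≤ Δ := by
    intro e he
    refine le_trans ?_ hdeg
    exact Finset.single_le_sum (f := fun e => α e) (fun _ _ => Nat.zero_le _) he
  have hcle : α.support.card ≤ Δ := by
    refine le_trans ?_ hdeg
    have := Finset.card_nsmul_le_sum α.support (fun e => α e) 1
      (fun e he => Nat.one_le_iff_ne_zero.2 (Finsupp.mem_support_iff.1 he))
    rw [smul_eq_mul, mul_one] at this; exact this
  have h1 : |∏ e ∈ α.support, (sigN n ^ α e * stdMom (α e))| ≤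
      ∏ e ∈ α.support, (sigN n ^ α e * MBound Δ) := by
    rw [Finset.abs_prod]
    refine Finset.prod_le_prod (fun _ _ => abs_nonneg _) fun e he => ?_
    rw [abs_mul, abs_of_nonneg (pow_nonneg hσ0 _)]
    exact mul_le_mul_of_nonneg_left (stdMom_le_MBound (hent e he)) (pow_nonneg hσ0 _)
  have h2 : ∏ e ∈ α.support, (sigN n ^ α e * MBound Δ) =
      sigN n ^ (expDeg α) * MBound Δ ^ α.support.card := by
    rw [Finset.prod_mul_distrib, Finset.prod_const, Finset.prod_pow_eq_pow_sum]
    rfl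
  have heven' : Even (expDeg α) := by
    refine Finset.even_sum _ fun e _ => heven e
  obtain ⟨k, hk⟩ := heven'
  have hsig2 : sigN n ^ 2 = (n:ℝ)⁻¹ := by
    rw [sigN, Real.sq_sqrt (NNReal.coe_nonneg _)]
    push_cast
    ring
  have h3 : sigN n ^ (expDeg α) = ((n:ℝ)⁻¹) ^ k := by
    rw [hk, ← two_mul, pow_mul, hsig2]
  have h4 : ((n:ℝ)⁻¹) ^ k ≤ ((n:ℝ)⁻¹) ^ (vertexSet α).ncard :=
    pow_le_pow_of_le_one hx0 hx1 (by omega)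
  have h5 : MBound Δ ^ α.support.card ≤ MBound Δ ^ Δ :=
    pow_le_pow_right₀ hM1 hcle
  calc |∏ e ∈ α.support, (sigN n ^ α e * stdMom (α e))|
      ≤ sigN n ^ (expDeg α) * MBound Δ ^ α.support.card := h1.trans_eq h2
    _ = ((n:ℝ)⁻¹) ^ k * MBound Δ ^ α.support.card := by rw [h3]
    _ ≤ ((n:ℝ)⁻¹) ^ (vertexSet α).ncard * MBound Δ ^ Δ :=
        mul_le_mul h4 h5 (by positivity) (by positivity)
    _ = (MBound Δ)^Δ * ((n:ℝ)⁻¹) ^ (vertexSet α).ncard := by ring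

end Assembly

/-- Expectation bound `|E[p(X) - p^Tr(X)]| ≤ c(Δ)‖p‖/n^{|S|}` under GOE. -/
theorem stmt_11 (Δ : ℕ) :
    ∃ c : ℝ, ∀ (n : ℕ) (p : LDP n) (S : Finset (Fin n)),
      p.totalDegree ≤ Δ →
      ContainsSet S p →
      (∀ α : Edge n →₀ ℕ, MvPolynomial.coeff α p ≠ 0 →
        ConnectedExp α ∨
          ∃ α₁ α₂ : Edge n →₀ ℕ, α = α₁ + α₂ ∧ Disjoint α₁.support α₂.support ∧
            ConnectedExp α₁ ∧ ConnectedExp α₂ ∧ ¬IsTree2 α₁ ∧ ¬IsTree2 α₂) →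
      |∫ M, (evalMat p M - evalMat (treeProj p) M) ∂(GOEMeasure n)| ≤
        c * LDPnorm p / (n : ℝ) ^ (S.card : ℕ) := by
  classical
  have hM1 := one_le_MBound Δ
  refine ⟨(MBound Δ)^Δ * ((Δ+1:ℝ)^(Δ*Δ) * (Δ+1)), ?_⟩
  intro n p S hdeg hcont hyp
  have hMn : (0:ℝ) < MBound Δ := lt_of_lt_of_le zero_lt_one hM1
  have hc0 : (0:ℝ) ≤ (MBound Δ)^Δ * ((Δ+1:ℝ)^(Δ*Δ) * (Δ+1)) := by positivity
  set q : LDP n := p - treeProj p with hq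
  have hint : ∀ M, evalMat p M - evalMat (treeProj p) M = evalMat q M := by
    intro M
    rw [hq]
    exact (map_sub (MvPolynomial.eval fun e : Edge n => M e.val.1 e.val.2) _ _).symm
  simp_rw [hint]
  have hcoeffq : ∀ α, MvPolynomial.coeff α q =
      if IsTree2 α then 0 else MvPolynomial.coeff α p := fun α => coeff_sub_treeProj p α
  rcases Nat.eq_zero_or_pos n with hn0 | hn
  · subst hn0
    haveI : IsEmpty (Edge 0) := ⟨fun e => (e.val.1).elim0⟩
    have hq0 : q = 0 := by
      apply MvPolynomial.ext
      intro α
      have hα : α = 0 := by ext e; exact isEmptyElim e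
      rw [hcoeffq, hα, if_pos isTree2_zero, MvPolynomial.coeff_zero]
    rw [hq0]
    have hev : ∀ M, evalMat (0 : LDP 0) M = 0 := by
      intro M; unfold evalMat; rw [map_zero]
    simp_rw [hev]
    rw [MeasureTheory.integral_zero, abs_zero]
    exact div_nonneg (mul_nonneg hc0 (LDPnorm_nonneg p)) (pow_nonneg (Nat.cast_nonneg _) _)
  · rw [integral_GOE q]
    set x : ℝ := (n:ℝ)⁻¹ with hx
    set P : (Edge n →₀ ℕ) → ℝ := fun α => ∏ e ∈ α.support, (sigN n ^ α e * stdMom (α e))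
      with hP
    have hqp : ∀ α ∈ q.support, ¬ IsTree2 α ∧ MvPolynomial.coeff α q = MvPolynomial.coeff α p
        ∧ MvPolynomial.coeff α p ≠ 0 := by
      intro α hα
      have hne := MvPolynomial.mem_support_iff.1 hα
      rw [hcoeffq] at hne
      by_cases h : IsTree2 α
      · rw [if_pos h] at hne; exact absurd rfl hne
      · rw [hcoeffq, if_neg h]
        exact ⟨h, rfl, by rwa [if_neg h] at hne⟩
    set A : Finset (Edge n →₀ ℕ) := q.support.filter (fun α => ∀ e, Even (α e)) with hA
    have hstep1 : |∑ α ∈ q.support, MvPolynomial.coeff α q * P α| ≤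
        ∑ α ∈ A, |MvPolynomial.coeff α q * P α| := by
      refine (Finset.abs_sum_le_sum_abs _ _).trans ?_
      rw [hA]
      rw [Finset.sum_filter_of_ne]
      intro α hα hne
      by_contra hodd
      push_neg at hodd
      obtain ⟨e, he⟩ := hodd
      have hodd' : Odd (α e) := by
        rcases Nat.even_or_odd (α e) with h | h
        · exact absurd h he
        · exact h
      have hes : e ∈ α.support := Finsupp.mem_support_iff.2
        (fun h0 => Nat.not_odd_zero (h0 ▸ hodd'))
      have hP0 : P α = 0 := by
        refine Finset.prod_eq_zero hes ?_
        rw [stdMom_odd hodd', mul_zero]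
      rw [hP0, mul_zero, abs_zero] at hne
      exact hne rfl
    have hstep2 : ∀ α ∈ A, |MvPolynomial.coeff α q * P α| ≤
        LDPnorm p * ((MBound Δ)^Δ * x ^ (vertexSet α).ncard) := by
      intro α hα
      obtain ⟨hαq, heven⟩ := Finset.mem_filter.1 hα
      obtain ⟨hnt, hcq, hcp⟩ := hqp α hαq
      have hαp : α ∈ p.support := MvPolynomial.mem_support_iff.2 hcp
      have hdegα : expDeg α ≤ Δ := le_trans (MvPolynomial.le_totalDegree hαp) hdeg
      have hstruct : 2 * (vertexSet α).ncard ≤ expDeg α :=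
        expDeg_main α heven hnt (hyp α hcp)
      rw [abs_mul]
      refine mul_le_mul ?_ (term_bound hn α heven hdegα hstruct) (abs_nonneg _)
        (LDPnorm_nonneg p)
      rw [hcq]
      exact coeff_le_LDPnorm p α
    have hcount : ∑ α ∈ A, x ^ (vertexSet α).ncard ≤
        ((Δ+1:ℝ))^(Δ*Δ) * (Δ+1) * x ^ S.card := by
      refine counting hn S A ?_ ?_ ?_
      · intro α hα
        obtain ⟨hαq, heven⟩ := Finset.mem_filter.1 hα
        obtain ⟨hnt, hcq, hcp⟩ := hqp α hαq
        rcases hcont α hcp with h0 | h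
        · exact absurd (h0 ▸ isTree2_zero) hnt
        · exact h
      · intro α hα
        obtain ⟨hαq, heven⟩ := Finset.mem_filter.1 hα
        obtain ⟨hnt, hcq, hcp⟩ := hqp α hαq
        exact le_trans (MvPolynomial.le_totalDegree (MvPolynomial.mem_support_iff.2 hcp)) hdeg
      · intro α hα
        obtain ⟨hαq, heven⟩ := Finset.mem_filter.1 hα
        obtain ⟨hnt, hcq, hcp⟩ := hqp α hαq
        have hdegα : expDeg α ≤ Δ :=
          le_trans (MvPolynomial.le_totalDegree (MvPolynomial.mem_support_iff.2 hcp)) hdeg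
        have hstruct : 2 * (vertexSet α).ncard ≤ expDeg α :=
          expDeg_main α heven hnt (hyp α hcp)
        omega
    calc |∑ α ∈ q.support, MvPolynomial.coeff α q * P α|
        ≤ ∑ α ∈ A, |MvPolynomial.coeff α q * P α| := hstep1
      _ ≤ ∑ α ∈ A, LDPnorm p * ((MBound Δ)^Δ * x ^ (vertexSet α).ncard) :=
          Finset.sum_le_sum hstep2
      _ = LDPnorm p * (MBound Δ)^Δ * ∑ α ∈ A, x ^ (vertexSet α).ncard := by
          rw [Finset.mul_sum]
          refine Finset.sum_congr rfl fun α _ => by ring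
      _ ≤ LDPnorm p * (MBound Δ)^Δ * (((Δ+1:ℝ))^(Δ*Δ) * (Δ+1) * x ^ S.card) := by
          refine mul_le_mul_of_nonneg_left hcount ?_
          exact mul_nonneg (LDPnorm_nonneg p) (by positivity)
      _ = (MBound Δ)^Δ * ((Δ+1:ℝ)^(Δ*Δ) * (Δ+1)) * LDPnorm p / (n : ℝ) ^ (S.card : ℕ) := by
          rw [hx, inv_pow, div_eq_mul_inv]
          ring
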